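/- Let ξ_1, …, ξ_d ∈ ℝ^d be linearly independent, let A be the d×d matrix whose i-th column is ξ_i/‖ξ_i‖ (so A is invertible), and set ε := 1/(√(d+1)·‖A^{−1}‖₂), where ‖·‖₂ denotes the operator norm with respect to the Euclidean norm. Then for every nonzero Λ ∈ ℝ^d there exists an index i ∈ {1,…,d} such that |⟨Λ, ξ_i⟩| > ε·‖Λ‖·‖ξ_i‖. Equivalently, the open cones R_{ξ_i}^ε = {Λ ≠ 0 : ⟨Λ, ξ_i⟩/(‖Λ‖‖ξ_i‖) > ε} together with their negatives cover ℝ^d \ {0}. -/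

import Mathlib

open MeasureTheory ProbabilityTheory Filter Set
open scoped ENNReal RealInnerProductSpace
open scoped Matrix.Norms.L2Operator Matrix

noncomputable section

/-- `ℝ^d` with the Euclidean norm. -/
abbrev Ed (d : ℕ) : Type := EuclideanSpace ℝ (Fin d)

/-- Action of the CAR transition kernel `P_g` on a function `h`:
`(P_g h)(Λ) = ∫ [ g(Λ,X)·h(Λ + (1−ρ)X) + (1−g(Λ,X))·h(Λ − ρX) ] dΓ(X)`. -/
def kernelOp (d : ℕ) (ρ : ℝ) (Γ : Measure (Ed d)) (g : Ed d → Ed d → ℝ)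
    (h : Ed d → ℝ) (Λ : Ed d) : ℝ :=
  ∫ X, g Λ X * h (Λ + (1 - ρ) • X) + (1 - g Λ X) * h (Λ - ρ • X) ∂Γ

/-- `W_Γ`: the linear span of the topological support of `Γ` (the set of points all of
whose open neighbourhoods have positive measure). -/
def suppSpan (d : ℕ) (Γ : Measure (Ed d)) : Submodule ℝ (Ed d) :=
  Submodule.span ℝ {x : Ed d | ∀ U : Set (Ed d), IsOpen U → x ∈ U → 0 < Γ U}

/-- The `(M,Δ)`-negative feedback condition for an allocation function `g`. -/
def NegFeedback (d : ℕ) (ρ M Δ : ℝ) (Γ : Measure (Ed d)) (g : Ed d → Ed d → ℝ) : Prop :=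
  ∀ Λ : Ed d, Λ ∈ suppSpan d Γ → M ≤ ‖Λ‖ →
    (∫ X, (g Λ X - ρ) * (⟪X, Λ⟫ / ‖Λ‖) ∂Γ) ≤ -Δ

/-- `Γ` is sub-exponential: `∫ exp(λ‖X‖) dΓ(X) < ∞` for some `λ > 0`. -/
def SubExp (d : ℕ) (Γ : Measure (Ed d)) : Prop :=
  ∃ l : ℝ, 0 < l ∧ Integrable (fun x => Real.exp (l * ‖x‖)) Γ

/-- The matrix whose `i`-th column is `ξ_i/‖ξ_i‖`. -/
def colMatrix (d : ℕ) (ξ : Fin d → Ed d) : Matrix (Fin d) (Fin d) ℝ :=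
  Matrix.of fun k i => (‖ξ i‖)⁻¹ * ξ i k

/-- The operator (spectral) norm of a matrix acting on Euclidean space. -/
def opNorm2 (d : ℕ) (A : Matrix (Fin d) (Fin d) ℝ) : ℝ :=
  ‖LinearMap.toContinuousLinearMap (Matrix.toEuclideanLin A)‖

/-- Cone covering: with `ε = 1/(√(d+1)·‖A⁻¹‖₂)`, for every nonzero `Λ` some `ξ_i` makes an
angle with `Λ` (or `−Λ`) of cosine greater than `ε`. -/
theorem stmt14 (d : ℕ) (ξ : Fin d → Ed d) (hli : LinearIndependent ℝ ξ) :
    ∀ Λ : Ed d, Λ ≠ 0 → ∃ i : Fin d,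
      1 / (Real.sqrt (d + 1) * opNorm2 d (colMatrix d ξ)⁻¹) * ‖Λ‖ * ‖ξ i‖
        < |⟪Λ, ξ i⟫| := by
  intro Λ hΛ
  classical
  have hd : 0 < d := by
    by_contra h
    push_neg at h
    interval_cases d
    exact hΛ (Subsingleton.elim _ _)
  have : Nonempty (Fin d) := ⟨⟨0, hd⟩⟩
  set A := colMatrix d ξ with hAdef
  have hA : IsUnit A := by
    rw [← Matrix.linearIndependent_cols_iff_isUnit]
    have : Nontrivial (Ed d) := inferInstance
    have h0 : ∀ i, ξ i ≠ 0 := hli.ne_zero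
    have h2 := (hli.units_smul (fun i => Units.mk0 (‖ξ i‖⁻¹) (by simp [norm_eq_zero, h0 i]))).map'
      (WithLp.linearEquiv 2 ℝ (Fin d → ℝ)).toLinearMap (LinearEquiv.ker _)
    have e : A.col = ⇑(WithLp.linearEquiv 2 ℝ (Fin d → ℝ)).toLinearMap ∘
        ((fun i => Units.mk0 (‖ξ i‖⁻¹) (by simp [norm_eq_zero, h0 i])) • ξ) := by
      ext i k
      simp [A, colMatrix, Matrix.col]
    rw [e]
    exact h2
  have hAdet : IsUnit A.det := (Matrix.isUnit_iff_isUnit_det A).mp hA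
  set B := A⁻¹ with hBdef
  have hAB : A * B = 1 := Matrix.mul_nonsing_inv A hAdet
  -- opNorm2 is the L2 op norm
  have hop : opNorm2 d B = ‖B‖ := rfl
  have hBne : B ≠ 0 := by
    intro h
    rw [h, Matrix.mul_zero] at hAB
    exact one_ne_zero (hAB.symm.trans rfl : (1 : Matrix (Fin d) (Fin d) ℝ) = 0)
  have hN : 0 < ‖B‖ := norm_pos_iff.mpr hBne
  have hΛn : 0 < ‖Λ‖ := norm_pos_iff.mpr hΛ
  set ε : ℝ := 1 / (Real.sqrt (d + 1) * ‖B‖) with hε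
  have hsq : 0 < Real.sqrt (d + 1) := Real.sqrt_pos.mpr (by positivity)
  by_contra hcon
  push_neg at hcon
  -- y = Aᵀ ⬝ Λ viewed in Euclidean space
  set y : Ed d := (EuclideanSpace.equiv (Fin d) ℝ).symm ((Aᵀ *ᵥ Λ)) with hy
  have hyi : ∀ i, y i = ‖ξ i‖⁻¹ * ⟪Λ, ξ i⟫ := by
    intro i
    have : y i = ∑ k, A k i * Λ k := by
      simp [hy, Matrix.mulVec, Matrix.transpose, dotProduct, EuclideanSpace.equiv]
    rw [this]
    rw [PiLp.inner_apply]
    simp only [RCLike.inner_apply, conj_trivial]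
    rw [Finset.mul_sum]
    congr 1
    funext k
    show (‖ξ i‖⁻¹ * ξ i k) * Λ k = ‖ξ i‖⁻¹ * (ξ i k * Λ k)
    ring
  -- |y i| ≤ ε ‖Λ‖
  have hybound : ∀ i, |y i| ≤ ε * ‖Λ‖ := by
    intro i
    rw [hyi i, abs_mul, abs_inv, abs_norm]
    rcases eq_or_ne (‖ξ i‖) 0 with h | h
    · simp [h]
      positivity
    · have hpos : 0 < ‖ξ i‖ := lt_of_le_of_ne (norm_nonneg _) (Ne.symm h)
      rw [inv_mul_le_iff₀ hpos]
      calc |⟪Λ, ξ i⟫| ≤ ε * ‖Λ‖ * ‖ξ i‖ := hcon i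
        _ = ‖ξ i‖ * (ε * ‖Λ‖) := by ring
  -- ‖y‖ ≤ √d * (ε ‖Λ‖)
  have hynorm : ‖y‖ ≤ Real.sqrt d * (ε * ‖Λ‖) := by
    rw [EuclideanSpace.norm_eq]
    have h1 : ∑ i, ‖y i‖ ^ 2 ≤ ∑ _i : Fin d, (ε * ‖Λ‖) ^ 2 := by
      apply Finset.sum_le_sum
      intro i _
      have := hybound i
      rw [Real.norm_eq_abs]
      nlinarith [abs_nonneg (y i)]
    calc Real.sqrt (∑ i, ‖y i‖ ^ 2) ≤ Real.sqrt (∑ _i : Fin d, (ε * ‖Λ‖) ^ 2) :=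
          Real.sqrt_le_sqrt h1
      _ = Real.sqrt (d * (ε * ‖Λ‖) ^ 2) := by simp [Finset.sum_const, Finset.card_univ]
      _ = Real.sqrt d * (ε * ‖Λ‖) := by
          rw [Real.sqrt_mul (by positivity), Real.sqrt_sq (by positivity)]
  -- Λ = Bᵀ ⬝ y
  have hrec : Λ = (EuclideanSpace.equiv (Fin d) ℝ).symm ((Bᵀ *ᵥ (Aᵀ *ᵥ Λ))) := by
    rw [Matrix.mulVec_mulVec, ← Matrix.transpose_mul, hAB, Matrix.transpose_one,
      Matrix.one_mulVec]
    rfl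
  have hBT : ‖Bᵀ‖ = ‖B‖ := by
    rw [← Matrix.conjTranspose_eq_transpose_of_trivial, Matrix.l2_opNorm_conjTranspose]
  have hkey : ‖Λ‖ ≤ ‖B‖ * ‖y‖ := by
    calc ‖Λ‖ = ‖(EuclideanSpace.equiv (Fin d) ℝ).symm ((Bᵀ *ᵥ (Aᵀ *ᵥ Λ)))‖ := by
          rw [← hrec]
      _ ≤ ‖Bᵀ‖ * ‖y‖ := Matrix.l2_opNorm_mulVec Bᵀ y
      _ = ‖B‖ * ‖y‖ := by rw [hBT]
  have hfinal : ‖Λ‖ ≤ Real.sqrt d / Real.sqrt (d + 1) * ‖Λ‖ := by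
    calc ‖Λ‖ ≤ ‖B‖ * ‖y‖ := hkey
      _ ≤ ‖B‖ * (Real.sqrt d * (ε * ‖Λ‖)) := by
          exact mul_le_mul_of_nonneg_left hynorm (le_of_lt hN)
      _ = Real.sqrt d / Real.sqrt (d + 1) * ‖Λ‖ := by
          rw [hε]
          field_simp
  have hlt : Real.sqrt d / Real.sqrt (d + 1) < 1 := by
    rw [div_lt_one hsq]
    exact Real.sqrt_lt_sqrt (Nat.cast_nonneg d) (by linarith)
  nlinarith
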